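/- Let S be a unital semigroup of partial isometries on a complex Hilbert space H such that Q(S) = {T T* : T in S} is commutative. Then there exists a semigroup S_max of partial isometries on H such that: (i) S ⊆ S_max; (ii) the double commutant of Q(S_max) equals the double commutant of Q(S); (iii) S_max is maximal with respect to (i) and (ii), i.e. any semigroup R of partial isometries with S_max ⊆ R and Q(R)'' = Q(S)'' satisfies R = S_max; and moreover (iv) T T* belongs to S_max for every T in S_max. -/

import Mathlib

open scoped InnerProductSpace

section HilbertAux

variable {H : Type*} [NormedAddCommGroup H] [InnerProductSpace ℂ H] [CompleteSpace H]

lemma proj_contraction {e : H →L[ℂ] H} (he : star e = e) (he2 : e * e = e) (z : H) :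
    ‖e z‖ ≤ ‖z‖ := by
  have hee : ∀ w, e (e w) = e w := fun w => by
    have : (e * e) w = e w := by rw [he2]
    simpa [ContinuousLinearMap.mul_apply] using this
  have hadj : ContinuousLinearMap.adjoint e = e := by
    rwa [ContinuousLinearMap.star_eq_adjoint] at he
  have key : ⟪z, e z⟫_ℂ = ⟪e z, e z⟫_ℂ := by
    conv_lhs => rw [← hee z]
    rw [← hadj, ContinuousLinearMap.adjoint_inner_right, hadj]
  by_cases h0 : ‖e z‖ = 0
  · rw [h0]; positivity
  have hpos : 0 < ‖e z‖ := lt_of_le_of_ne (norm_nonneg _) (Ne.symm h0)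
  have h1 : ‖e z‖ ^ 2 = ‖⟪z, e z⟫_ℂ‖ := by
    rw [key, inner_self_eq_norm_sq_to_K]
    simp [norm_pow]
  have h2 : ‖⟪z, e z⟫_ℂ‖ ≤ ‖z‖ * ‖e z‖ := norm_inner_le_norm z (e z)
  nlinarith [h1, h2, hpos]

lemma proj_fix {f : H →L[ℂ] H} (hf : star f = f) (hf2 : f * f = f) {y : H}
    (hy : ‖y‖ ≤ ‖f y‖) : f y = y := by
  have hff : ∀ w, f (f w) = f w := fun w => by
    have : (f * f) w = f w := by rw [hf2]
    simpa [ContinuousLinearMap.mul_apply] using this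
  have hadj : ContinuousLinearMap.adjoint f = f := by
    rwa [ContinuousLinearMap.star_eq_adjoint] at hf
  have key : ⟪y, f y⟫_ℂ = ⟪f y, f y⟫_ℂ := by
    conv_lhs => rw [← hff y]
    rw [← hadj, ContinuousLinearMap.adjoint_inner_right, hadj]
  have hnorm : ‖f y‖ = ‖y‖ := le_antisymm (proj_contraction hf hf2 y) hy
  have hre : RCLike.re ⟪y, f y⟫_ℂ = ‖y‖ ^ 2 := by
    rw [key, inner_self_eq_norm_sq, hnorm]
  have hz : ‖y - f y‖ ^ 2 = 0 := by
    rw [norm_sub_sq (𝕜 := ℂ), hre, hnorm]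
    ring
  have : y - f y = 0 := by
    have := (pow_eq_zero_iff (n := 2) (by norm_num)).mp hz
    exact norm_eq_zero.mp this
  exact (sub_eq_zero.mp this).symm

lemma proj_comm {e f : H →L[ℂ] H} (he : star e = e) (he2 : e * e = e)
    (hf : star f = f) (hf2 : f * f = f) (h : e * f * (e * f) = e * f) :
    e * f = f * e := by
  have hfix : ∀ x, f ((e * f) x) = (e * f) x := by
    intro x
    have hyy : (e * f) ((e * f) x) = (e * f) x := by
      have : (e * f * (e * f)) x = (e * f) x := by rw [h]
      simpa [ContinuousLinearMap.mul_apply] using this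
    have hy2 : e (f ((e * f) x)) = (e * f) x := by
      simpa [ContinuousLinearMap.mul_apply] using hyy
    have hle : ‖(e * f) x‖ ≤ ‖f ((e * f) x)‖ := by
      calc ‖(e * f) x‖ = ‖e (f ((e * f) x))‖ := by rw [hy2]
        _ ≤ ‖f ((e * f) x)‖ := proj_contraction he he2 _
    exact proj_fix hf hf2 hle
  have hleft : f * (e * f) = e * f := by
    ext x
    simpa [ContinuousLinearMap.mul_apply] using hfix x
  have h2 : f * e * f = e * f := by rw [mul_assoc]; exact hleft
  have h3 := congrArg star h2
  simp only [star_mul, he, hf] at h3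
  calc e * f = f * (e * f) := hleft.symm
    _ = f * e := h3

end HilbertAux

/-- The set of "generalized final projections" generated by a set `M` of operators:
the multiplicative closure of `{1} ∪ {T T* : T ∈ M}` which is moreover closed under
conjugation `P ↦ T P T*` by elements of `M`. -/
inductive PiGen {H : Type*} [NormedAddCommGroup H] [InnerProductSpace ℂ H]
    [CompleteSpace H] (M : Set (H →L[ℂ] H)) : (H →L[ℂ] H) → Prop
  | one : PiGen M 1
  | base {T : H →L[ℂ] H} : T ∈ M → PiGen M (T * star T)
  | mul {P Q : H →L[ℂ] H} : PiGen M P → PiGen M Q → PiGen M (P * Q)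
  | conj {T P : H →L[ℂ] H} : T ∈ M → PiGen M P → PiGen M (T * P * star T)

theorem exists_maximal_semigroup {H : Type*} [NormedAddCommGroup H]
    [InnerProductSpace ℂ H] [CompleteSpace H] (𝒮 : Set (H →L[ℂ] H))
    (hmul : ∀ A ∈ 𝒮, ∀ B ∈ 𝒮, A * B ∈ 𝒮)
    (hone : (1 : H →L[ℂ] H) ∈ 𝒮)
    (hpi : ∀ A ∈ 𝒮, A * star A * A = A)
    (hQcomm : ∀ A ∈ 𝒮, ∀ B ∈ 𝒮,
      (A * star A) * (B * star B) = (B * star B) * (A * star A)) :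
    ∃ 𝒮max : Set (H →L[ℂ] H),
      (∀ A ∈ 𝒮max, ∀ B ∈ 𝒮max, A * B ∈ 𝒮max) ∧
      (∀ A ∈ 𝒮max, A * star A * A = A) ∧
      𝒮 ⊆ 𝒮max ∧
      Set.centralizer (Set.centralizer ((fun T => T * star T) '' 𝒮max)) =
        Set.centralizer (Set.centralizer ((fun T => T * star T) '' 𝒮)) ∧
      (∀ ℛ : Set (H →L[ℂ] H),
        (∀ A ∈ ℛ, ∀ B ∈ ℛ, A * B ∈ ℛ) →
        (∀ A ∈ ℛ, A * star A * A = A) →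
        𝒮max ⊆ ℛ →
        Set.centralizer (Set.centralizer ((fun T => T * star T) '' ℛ)) =
          Set.centralizer (Set.centralizer ((fun T => T * star T) '' 𝒮)) →
        ℛ = 𝒮max) ∧
      (∀ T ∈ 𝒮max, T * star T ∈ 𝒮max) := by
  classical
  -- the family of admissible semigroups
  set F : Set (Set (H →L[ℂ] H)) :=
    {R | (∀ A ∈ R, ∀ B ∈ R, A * B ∈ R) ∧ (∀ A ∈ R, A * star A * A = A) ∧ 𝒮 ⊆ R ∧
      Set.centralizer ((fun T => T * star T) '' R) =
        Set.centralizer ((fun T => T * star T) '' 𝒮)} with hFdef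
  have hSF : 𝒮 ∈ F := ⟨hmul, hpi, subset_rfl, rfl⟩
  -- Zorn's lemma
  obtain ⟨M, hSM, hMmax⟩ := zorn_subset_nonempty F (by
    intro c hcF hc hcne
    obtain ⟨R₀, hR₀⟩ := hcne
    refine ⟨⋃₀ c, ⟨?_, ?_, ?_, ?_⟩, fun s hs => Set.subset_sUnion_of_mem hs⟩
    · rintro A ⟨R₁, hR₁c, hA⟩ B ⟨R₂, hR₂c, hB⟩
      rcases hc.total hR₁c hR₂c with h | h
      · exact ⟨R₂, hR₂c, (hcF hR₂c).1 A (h hA) B hB⟩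
      · exact ⟨R₁, hR₁c, (hcF hR₁c).1 A hA B (h hB)⟩
    · rintro A ⟨R, hRc, hA⟩
      exact (hcF hRc).2.1 A hA
    · exact fun x hx => ⟨R₀, hR₀, (hcF hR₀).2.2.1 hx⟩
    · apply Set.Subset.antisymm
      · have h1 : (fun T => T * star T) '' R₀ ⊆ (fun T => T * star T) '' ⋃₀ c :=
          Set.image_mono (Set.subset_sUnion_of_mem hR₀)
        have h2 := Set.centralizer_subset h1
        rw [(hcF hR₀).2.2.2] at h2
        exact h2
      · intro x hx
        apply Set.mem_centralizer_iff.mpr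
        rintro m ⟨T, ⟨R, hRc, hTR⟩, rfl⟩
        have hx' : x ∈ Set.centralizer ((fun T => T * star T) '' R) := by
          rw [(hcF hRc).2.2.2]; exact hx
        exact hx' _ ⟨T, hTR, rfl⟩) 𝒮 hSF
  have hMF : M ∈ F := hMmax.1
  obtain ⟨hmulM, hpiM, hSMsub, h4⟩ := hMF
  have h1M : (1 : H →L[ℂ] H) ∈ M := hSMsub hone
  -- basic identities
  have hst : ∀ T ∈ M, star T * T * star T = star T := by
    intro T hT
    have h := congrArg star (hpiM T hT)
    simp only [star_mul, star_star] at h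
    rw [mul_assoc]
    exact h
  -- initial projections commute with final projections (Halmos–Wallen)
  have hIF : ∀ T ∈ M, ∀ S ∈ M,
      (star T * T) * (S * star S) = (S * star S) * (star T * T) := by
    intro T hT S hS
    apply proj_comm
    · simp
    · have h := congrArg (fun X => star T * X) (hpiM T hT)
      simp only [mul_assoc] at h ⊢
      exact h
    · simp [star_mul]
    · have h := congrArg (fun X => X * star S) (hpiM S hS)
      simp only [mul_assoc] at h ⊢
      exact h
    · have h1 := hpiM (T * S) (hmulM T hT S hS)
      rw [star_mul] at h1
      have h2 := congrArg (fun X => star T * X * star S) h1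
      simp only [mul_assoc] at h2 ⊢
      exact h2
  -- the commutative von Neumann algebra (as a double centralizer)
  set A : Set (H →L[ℂ] H) :=
    Set.centralizer (Set.centralizer ((fun T => T * star T) '' M)) with hAdef
  have hQS_sub : ((fun T => T * star T) '' 𝒮) ⊆
      Set.centralizer ((fun T => T * star T) '' 𝒮) := by
    rintro x ⟨B, hB, rfl⟩
    apply Set.mem_centralizer_iff.mpr
    rintro m ⟨C, hC, rfl⟩
    exact hQcomm C hC B hB
  have hA_sub : A ⊆ Set.centralizer ((fun T => T * star T) '' M) := by
    rw [hAdef, h4]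
    exact Set.centralizer_subset hQS_sub
  have hQMA : ((fun T => T * star T) '' M) ⊆ A := Set.subset_centralizer_centralizer
  have hAcomm : ∀ x ∈ A, ∀ y ∈ A, x * y = y * x := fun x hx y hy =>
    (hx y (hA_sub hy)).symm
  have hTT' : ∀ T ∈ M, star T * T ∈ Set.centralizer ((fun T => T * star T) '' M) := by
    intro T hT
    apply Set.mem_centralizer_iff.mpr
    rintro m ⟨S, hS, rfl⟩
    exact (hIF T hT S hS).symm
  have hPcommTT : ∀ P ∈ A, ∀ T ∈ M, (star T * T) * P = P * (star T * T) :=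
    fun P hP T hT => hP _ (hTT' T hT)
  have key1 : ∀ P ∈ A, ∀ T ∈ M, star T * (T * (P * star T)) = P * star T := by
    intro P hP T hT
    calc star T * (T * (P * star T)) = star T * T * P * star T := by
          simp only [← mul_assoc]
      _ = P * (star T * T) * star T := by rw [hPcommTT P hP T hT]
      _ = P * star T := by rw [mul_assoc P, hst T hT]
  -- the main structure induction
  have main : ∀ P, PiGen M P →
      (star P = P ∧ P * P = P ∧ ∀ T ∈ M, T * P * star T ∈ A) := by
    intro P hP
    induction hP with
    | one =>
      refine ⟨star_one _, one_mul 1, fun T hT => ?_⟩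
      rw [mul_one]
      exact hQMA ⟨T, hT, rfl⟩
    | @base T hT =>
      refine ⟨by simp [star_mul], ?_, ?_⟩
      · have h := congrArg (fun X => X * star T) (hpiM T hT)
        simp only [mul_assoc] at h ⊢
        exact h
      · intro S hS
        have heq : S * (T * star T) * star S = (S * T) * star (S * T) := by
          simp only [star_mul]
          simp only [mul_assoc]
        rw [heq]
        exact hQMA ⟨S * T, hmulM S hS T hT, rfl⟩
    | @mul P Q hP hQ ihP ihQ =>
      have hPA : P ∈ A := by
        have := ihP.2.2 1 h1M
        simpa using this
      have hQA : Q ∈ A := by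
        have := ihQ.2.2 1 h1M
        simpa using this
      have hQP : Q * P = P * Q := hAcomm Q hQA P hPA
      refine ⟨?_, ?_, ?_⟩
      · rw [star_mul, ihP.1, ihQ.1, hQP]
      · calc P * Q * (P * Q) = P * (Q * P * Q) := by simp only [mul_assoc]
          _ = P * (P * Q * Q) := by rw [hQP]
          _ = P * Q := by rw [mul_assoc P Q Q, ihQ.2.1, ← mul_assoc, ihP.2.1]
      · intro T hT
        have heq : T * (P * Q) * star T = (T * P * star T) * (T * Q * star T) := by
          calc T * (P * Q) * star T
              = T * (P * (Q * star T)) := by simp only [mul_assoc]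
            _ = T * (P * (star T * (T * (Q * star T)))) := by
                rw [key1 Q hQA T hT]
            _ = (T * P * star T) * (T * Q * star T) := by simp only [mul_assoc]
        rw [heq]
        exact Set.mul_mem_centralizer (ihP.2.2 T hT) (ihQ.2.2 T hT)
    | @conj T P hT hP ih =>
      have hPA : P ∈ A := by
        have := ih.2.2 1 h1M
        simpa using this
      refine ⟨?_, ?_, ?_⟩
      · simp only [star_mul, star_star, ih.1, mul_assoc]
      · calc T * P * star T * (T * P * star T)
            = T * P * (star T * (T * (P * star T))) := by simp only [mul_assoc]
          _ = T * P * (P * star T) := by rw [key1 P hPA T hT]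
          _ = T * (P * P) * star T := by simp only [mul_assoc]
          _ = T * P * star T := by rw [ih.2.1]
      · intro S hS
        have heq : S * (T * P * star T) * star S = (S * T) * P * star (S * T) := by
          simp only [star_mul]
          simp only [mul_assoc]
        rw [heq]
        exact ih.2.2 (S * T) (hmulM S hS T hT)
  have memA : ∀ P, PiGen M P → P ∈ A := by
    intro P hP
    have := (main P hP).2.2 1 h1M
    simpa using this
  -- the enlarged semigroup
  set N : Set (H →L[ℂ] H) :=
    {X | ∃ P T, PiGen M P ∧ T ∈ M ∧ X = P * T} with hNdef
  have hMN : M ⊆ N := fun T hT => ⟨1, T, PiGen.one, hT, (one_mul T).symm⟩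
  -- key product identity
  have key2 : ∀ (Q : H →L[ℂ] H), Q ∈ A → ∀ T ∈ M, ∀ S : H →L[ℂ] H,
      (T * Q * star T) * (T * S) = T * (Q * S) := by
    intro Q hQA T hT S
    calc (T * Q * star T) * (T * S)
        = T * (Q * (star T * (T * S))) := by simp only [mul_assoc]
      _ = T * (Q * (star T * T * S)) := by rw [← mul_assoc (star T) T S]
      _ = T * (Q * (star T * T) * S) := by rw [← mul_assoc Q (star T * T) S]
      _ = T * (star T * T * Q * S) := by rw [← hPcommTT Q hQA T hT]
      _ = T * (Q * S) := by
          simp only [← mul_assoc]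
          rw [hpiM T hT]
  have hNF : N ∈ F := by
    refine ⟨?_, ?_, fun x hx => hMN (hSMsub hx), ?_⟩
    · rintro X ⟨P, T, hPpi, hT, rfl⟩ Y ⟨Q, S, hQpi, hS, rfl⟩
      refine ⟨P * (T * Q * star T), T * S, PiGen.mul hPpi (PiGen.conj hT hQpi),
        hmulM T hT S hS, ?_⟩
      have := key2 Q (memA Q hQpi) T hT S
      calc P * T * (Q * S) = P * (T * (Q * S)) := by simp only [mul_assoc]
        _ = P * ((T * Q * star T) * (T * S)) := by rw [this]
        _ = P * (T * Q * star T) * (T * S) := by rw [← mul_assoc]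
    · rintro X ⟨P, T, hPpi, hT, rfl⟩
      obtain ⟨hPs, hP2, _⟩ := main P hPpi
      have hPA : P ∈ A := memA P hPpi
      have hTTA : T * star T ∈ A := hQMA ⟨T, hT, rfl⟩
      have hcomm : T * star T * P = P * (T * star T) := hAcomm _ hTTA _ hPA
      calc P * T * star (P * T) * (P * T)
          = P * T * (star T * P) * (P * T) := by rw [star_mul, hPs]
        _ = P * (T * star T * (P * (P * T))) := by simp only [mul_assoc]
        _ = P * (T * star T * (P * P * T)) := by rw [← mul_assoc P P T]
        _ = P * (T * star T * (P * T)) := by rw [hP2]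
        _ = P * (T * star T * P * T) := by rw [← mul_assoc (T * star T) P T]
        _ = P * (P * (T * star T) * T) := by rw [hcomm]
        _ = P * T := by
            simp only [← mul_assoc]
            rw [hP2]
            have h := congrArg (fun X => P * X) (hpiM T hT)
            simp only [mul_assoc] at h ⊢
            exact h
    · apply Set.Subset.antisymm
      · have h1 : (fun T => T * star T) '' M ⊆ (fun T => T * star T) '' N :=
          Set.image_mono hMN
        have h2 := Set.centralizer_subset h1
        rw [h4] at h2
        exact h2
      · intro x hx
        have hx' : x ∈ Set.centralizer ((fun T => T * star T) '' M) := by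
          rw [h4]; exact hx
        apply Set.mem_centralizer_iff.mpr
        rintro m ⟨X, ⟨P, T, hPpi, hT, rfl⟩, rfl⟩
        obtain ⟨hPs, hP2, _⟩ := main P hPpi
        have heq : (P * T) * star (P * T) = P * (T * star T) * P := by
          rw [star_mul, hPs]
          simp only [mul_assoc]
        have hmem : P * (T * star T) * P ∈ A :=
          memA _ (PiGen.mul (PiGen.mul hPpi (PiGen.base hT)) hPpi)
        show (P * T) * star (P * T) * x = x * ((P * T) * star (P * T))
        rw [heq]
        exact (hmem x hx').symm
  have hNM : N ⊆ M := hMmax.2 hNF hMN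
  -- conclusion
  refine ⟨M, hmulM, hpiM, hSMsub, ?_, ?_, ?_⟩
  · rw [h4]
  · intro ℛ h1 h2 h3 h4'
    have h4'' : Set.centralizer ((fun T => T * star T) '' ℛ) =
        Set.centralizer ((fun T => T * star T) '' 𝒮) := by
      rw [← Set.centralizer_centralizer_centralizer ((fun T => T * star T) '' ℛ), h4',
        Set.centralizer_centralizer_centralizer]
    have hRF : ℛ ∈ F := ⟨h1, h2, hSMsub.trans h3, h4''⟩
    exact Set.Subset.antisymm (hMmax.2 hRF h3) h3
  · intro T hT
    exact hNM ⟨T * star T, 1, PiGen.base hT, h1M, (mul_one _).symm⟩
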